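/- Let I ⊆ ℝ be a nonempty open interval, κ > 0, and y : I → (0, ∞) a function. Suppose there exist an integer n ≥ 1, pairwise distinct reals c_1,…,c_n > 0, a constant x̄ ∈ ℝ, and differentiable functions x̂_1,…,x̂_n, r : I → (0, ∞) such that x̂_i′(t) = −κ c_i y(t) x̂_i(t), r′(t) = −κ r(t), and y(t) = 1 − Σ_{i=1}^n x̂_i(t) − r(t) − x̄ for all t ∈ I. If y also admits a second such representation with data (n′, c′_1,…,c′_{n′}, x̄′, x̂′_i, r′) and the same κ, then n = n′ and the sets {c_1,…,c_n} and {c′_1,…,c′_{n′}} are equal. -/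

import Mathlib

set_option maxHeartbeats 1000000

open Set

instance : CoeFun (AddMonoidAlgebra ℝ ℝ) (fun _ => ℝ → ℝ) := ⟨fun P => P.coeff⟩

lemma rpow_indep (z1 z2 : ℝ) (h1 : 0 < z1) (h12 : z1 < z2) (s : Finset ℝ) : ∀ (β : ℝ → ℝ),
    (∀ z ∈ Set.Ioo z1 z2, ∑ e ∈ s, β e * z ^ e = 0) → ∀ e ∈ s, β e = 0 := by
  induction s using Finset.induction_on with
  | empty => intro β h e he; exact absurd he (Finset.notMem_empty e)
  | @insert c0 t hc0 ih =>
    intro β h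
    have hmid : (z1 + z2) / 2 ∈ Set.Ioo z1 z2 := ⟨by linarith, by linarith⟩
    have key : ∀ z0 ∈ Set.Ioo z1 z2, ∑ e ∈ insert c0 t, (β e * (e - c0)) * z0 ^ e = 0 := by
      intro z0 hz0
      have hz0pos : 0 < z0 := lt_trans h1 hz0.1
      set g : ℝ → ℝ := fun z => ∑ e ∈ insert c0 t, β e * z ^ (e - c0) with hg
      have hg0 : ∀ z ∈ Set.Ioo z1 z2, g z = 0 := by
        intro z hz
        have hzpos : 0 < z := lt_trans h1 hz.1
        have : g z = (∑ e ∈ insert c0 t, β e * z ^ e) / z ^ (c0 : ℝ) := by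
          rw [Finset.sum_div]
          refine Finset.sum_congr rfl fun e _ => ?_
          rw [Real.rpow_sub hzpos, mul_div_assoc]
        rw [this, h z hz, zero_div]
      have hder : HasDerivAt g (∑ e ∈ insert c0 t, β e * ((e - c0) * z0 ^ (e - c0 - 1))) z0 := by
        apply HasDerivAt.fun_sum
        intro e _
        exact (Real.hasDerivAt_rpow_const (Or.inl hz0pos.ne')).const_mul (β e)
      have hder0 : HasDerivAt g 0 z0 := by
        have hev : g =ᶠ[nhds z0] (fun _ => (0:ℝ)) := by
          filter_upwards [isOpen_Ioo.mem_nhds hz0] with z hz using hg0 z hz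
        exact (hasDerivAt_const z0 (0:ℝ)).congr_of_eventuallyEq hev
      have heq : ∑ e ∈ insert c0 t, β e * ((e - c0) * z0 ^ (e - c0 - 1)) = 0 :=
        hder.unique hder0
      have := congrArg (fun w => w * z0 ^ (c0 + 1)) heq
      simp only [Finset.sum_mul, zero_mul] at this
      rw [← this]
      refine Finset.sum_congr rfl fun e _ => ?_
      rw [mul_assoc, mul_assoc, mul_assoc, ← Real.rpow_add hz0pos]
      ring_nf
    have key2 : ∀ z0 ∈ Set.Ioo z1 z2, ∑ e ∈ t, (β e * (e - c0)) * z0 ^ e = 0 := by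
      intro z0 hz0
      have := key z0 hz0
      rwa [Finset.sum_insert hc0, sub_self, mul_zero, zero_mul, zero_add] at this
    have ht : ∀ e ∈ t, β e * (e - c0) = 0 := ih _ key2
    have htz : ∀ e ∈ t, β e = 0 := by
      intro e he
      have hene : e - c0 ≠ 0 := sub_ne_zero.mpr (fun hh => hc0 (hh ▸ he))
      exact (mul_eq_zero.mp (ht e he)).resolve_right hene
    have hc0z : β c0 = 0 := by
      have := h _ hmid
      rw [Finset.sum_insert hc0, Finset.sum_eq_zero (fun e he => by rw [htz e he, zero_mul]),
        add_zero] at this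
      have hp : (0:ℝ) < ((z1 + z2)/2) ^ (c0:ℝ) := Real.rpow_pos_of_pos (by linarith) _
      exact (mul_eq_zero.mp this).resolve_right hp.ne'
    intro e he
    rcases Finset.mem_insert.mp he with rfl | he'
    · exact hc0z
    · exact htz e he'

lemma const_of_deriv0 (a b t0 : ℝ) (ht0 : t0 ∈ Set.Ioo a b) (g : ℝ → ℝ)
    (hg : ∀ t ∈ Set.Ioo a b, HasDerivAt g 0 t) : ∀ t ∈ Set.Ioo a b, g t = g t0 := by
  intro t ht
  have hcont : ∀ u v : ℝ, u ∈ Set.Ioo a b → v ∈ Set.Ioo a b → u ≤ v →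
      ∀ w ∈ Set.Icc u v, g w = g u := by
    intro u v hu hv huv
    have hsub : Set.Icc u v ⊆ Set.Ioo a b := fun w hw => ⟨lt_of_lt_of_le hu.1 hw.1,
      lt_of_le_of_lt hw.2 hv.2⟩
    refine constant_of_has_deriv_right_zero
      (fun w hw => (hg w (hsub hw)).continuousAt.continuousWithinAt) ?_
    intro w hw
    exact (hg w (hsub ⟨hw.1, le_of_lt hw.2⟩)).hasDerivWithinAt
  rcases le_total t0 t with h | h
  · exact (hcont t0 t ht0 ht h t ⟨h, le_refl t⟩)
  · exact (hcont t t0 ht ht0 h t0 ⟨h, le_refl t0⟩).symm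

noncomputable def evalHom (z : ℝ) (hz : 0 < z) : AddMonoidAlgebra ℝ ℝ →ₐ[ℝ] ℝ :=
  AddMonoidAlgebra.lift ℝ ℝ ℝ
    { toFun := fun e => z ^ (Multiplicative.toAdd e)
      map_one' := by simpa using Real.rpow_zero z
      map_mul' := fun e f => by simpa using Real.rpow_add hz _ _ }

lemma evalHom_single (z : ℝ) (hz : 0 < z) (e v : ℝ) :
    evalHom z hz (AddMonoidAlgebra.single e v) = v * z ^ e := by
  rw [evalHom, AddMonoidAlgebra.lift_single]
  simp [smul_eq_mul]

lemma evalHom_eq_sum (z : ℝ) (hz : 0 < z) (P : AddMonoidAlgebra ℝ ℝ) :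
    evalHom z hz P = ∑ e ∈ P.coeff.support, P e * z ^ e := by
  rw [evalHom, AddMonoidAlgebra.lift_apply, Finsupp.sum]
  simp [smul_eq_mul]

lemma eval_zero_of (z1 z2 : ℝ) (h1 : 0 < z1) (h12 : z1 < z2) (P : AddMonoidAlgebra ℝ ℝ)
    (h : ∀ z (hz : z ∈ Set.Ioo z1 z2), evalHom z (lt_trans h1 hz.1) P = 0) : P = 0 := by
  have key : ∀ e ∈ P.coeff.support, P e = 0 := by
    refine rpow_indep z1 z2 h1 h12 P.coeff.support P.coeff (fun z hz => ?_)
    rw [← evalHom_eq_sum z (lt_trans h1 hz.1) P]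
    exact h z hz
  ext e
  by_cases he : e ∈ P.coeff.support
  · exact key e he
  · exact Finsupp.notMem_support_iff.mp he

lemma mul_apply_top (P Q : AddMonoidAlgebra ℝ ℝ) (p q : ℝ)
    (hP : ∀ e, p < e → P e = 0) (hQ : ∀ e, q < e → Q e = 0) :
    (P * Q) (p + q) = P p * Q q := by
  rw [AddMonoidAlgebra.coeff_mul, Finsupp.sum]
  have inner : ∀ a ∈ P.coeff.support,
      (Q.coeff.sum fun b w => if a + b = p + q then P a * w else 0)
        = if a = p then P a * Q q else 0 := by
    intro a ha
    have hap : a ≤ p := by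
      by_contra hlt
      exact (Finsupp.mem_support_iff.mp ha) (hP a (lt_of_not_ge hlt))
    rw [Finsupp.sum]
    by_cases hap' : a = p
    · subst hap'
      simp only [if_pos rfl]
      have : ∀ b ∈ Q.coeff.support, (if a + b = a + q then P a * Q b else 0)
          = if b = q then P a * Q q else 0 := by
        intro b hb
        by_cases hbq : b = q
        · subst hbq; simp
        · rw [if_neg (fun hh => hbq (by linarith [add_left_cancel hh])), if_neg hbq]
      rw [Finset.sum_congr rfl this, Finset.sum_ite_eq' Q.coeff.support q _]
      by_cases hq : q ∈ Q.coeff.support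
      · simp [hq]
      · simp [hq, Finsupp.notMem_support_iff.mp hq]
    · rw [if_neg hap']
      apply Finset.sum_eq_zero
      intro b hb
      have hbq : b ≤ q := by
        by_contra hlt
        exact (Finsupp.mem_support_iff.mp hb) (hQ b (lt_of_not_ge hlt))
      have hane : a < p := lt_of_le_of_ne hap hap'
      exact if_neg (by intro hh; linarith)
  rw [Finset.sum_congr rfl inner, Finset.sum_ite_eq' P.coeff.support p _]
  by_cases hp : p ∈ P.coeff.support
  · simp [hp]
  · simp [hp, Finsupp.notMem_support_iff.mp hp]


lemma evalHom_asingle (z : ℝ) (hz : 0 < z) (e v : ℝ) :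
    evalHom z hz (AddMonoidAlgebra.single e v) = v * z ^ e :=
  evalHom_single z hz e v

lemma asingle_apply (e v f : ℝ) :
    (AddMonoidAlgebra.single e v : AddMonoidAlgebra ℝ ℝ) f = if e = f then v else 0 :=
  AddMonoidAlgebra.coeff_single_apply

/-- On a vaccine-surplus subinterval where at least one rationalist group and the
imitative groups with positive payoffs are present: if the positive output `y` admits two
representations `y = 1 − Σ_i x̂_i − r − x̄` with positive `x̂_i` satisfying
`x̂_i′ = −κ c_i y x̂_i` for pairwise distinct positive payoffs `c_i`, positive `r`
satisfying `r′ = −κ r` (and the same `κ > 0`), then the number of imitative groups and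
the set of positive imitative payoff values are the same in both representations. -/
theorem stmt_13 (a b : ℝ) (hab : a < b) (κ : ℝ) (hκ : 0 < κ) (y : ℝ → ℝ)
    (hypos : ∀ t ∈ Set.Ioo a b, 0 < y t)
    (n n' : ℕ) (hn : 1 ≤ n) (hn' : 1 ≤ n')
    (c : Fin n → ℝ) (c' : Fin n' → ℝ)
    (hc : ∀ i, 0 < c i) (hc' : ∀ i, 0 < c' i)
    (hcd : Function.Injective c) (hcd' : Function.Injective c')
    (xbar xbar' : ℝ)
    (x : Fin n → ℝ → ℝ) (x' : Fin n' → ℝ → ℝ) (r r' : ℝ → ℝ)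
    (hxpos : ∀ i, ∀ t ∈ Set.Ioo a b, 0 < x i t)
    (hx'pos : ∀ i, ∀ t ∈ Set.Ioo a b, 0 < x' i t)
    (hrpos : ∀ t ∈ Set.Ioo a b, 0 < r t)
    (hr'pos : ∀ t ∈ Set.Ioo a b, 0 < r' t)
    (hxode : ∀ i, ∀ t ∈ Set.Ioo a b, HasDerivAt (x i) (-κ * c i * y t * x i t) t)
    (hx'ode : ∀ i, ∀ t ∈ Set.Ioo a b, HasDerivAt (x' i) (-κ * c' i * y t * x' i t) t)
    (hrode : ∀ t ∈ Set.Ioo a b, HasDerivAt r (-κ * r t) t)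
    (hr'ode : ∀ t ∈ Set.Ioo a b, HasDerivAt r' (-κ * r' t) t)
    (hrep : ∀ t ∈ Set.Ioo a b, y t = 1 - (∑ i, x i t) - r t - xbar)
    (hrep' : ∀ t ∈ Set.Ioo a b, y t = 1 - (∑ i, x' i t) - r' t - xbar') :
    n = n' ∧ Set.range c = Set.range c' := by
  classical
  set t0 : ℝ := (a + b) / 2 with ht0def
  have ht0 : t0 ∈ Set.Ioo a b := ⟨by rw [ht0def]; linarith, by rw [ht0def]; linarith⟩
  set i0 : Fin n := ⟨0, hn⟩ with hi0def
  -- antiderivative of y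
  set Y : ℝ → ℝ := fun t => (Real.log (x i0 t0) - Real.log (x i0 t)) / (κ * c i0) with hYdef
  have hκc0 : κ * c i0 ≠ 0 := (mul_pos hκ (hc i0)).ne'
  have hY : ∀ t ∈ Set.Ioo a b, HasDerivAt Y (y t) t := by
    intro t ht
    have hlog : HasDerivAt (fun s => Real.log (x i0 s))
        ((-κ * c i0 * y t * x i0 t) / x i0 t) t := (hxode i0 t ht).log (hxpos i0 t ht).ne'
    have h2 : HasDerivAt (fun s => Real.log (x i0 t0) - Real.log (x i0 s))
        (-((-κ * c i0 * y t * x i0 t) / x i0 t)) t := hlog.const_sub _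
    have h3 := h2.div_const (κ * c i0)
    refine h3.congr_deriv ?_
    field_simp [(hxpos i0 t ht).ne', (hc i0).ne']
  have hY0 : Y t0 = 0 := by rw [hYdef]; simp
  -- E and V
  set E : ℝ → ℝ := fun t => Real.exp (-(κ * Y t)) with hEdef
  have hEpos : ∀ t, 0 < E t := fun t => Real.exp_pos _
  set V : ℝ → ℝ := fun t => Real.exp (-(κ * (t - t0))) with hVdef
  have hVpos : ∀ t, 0 < V t := fun t => Real.exp_pos _
  -- solve the x ODEs
  have hsol : ∀ (γ : ℝ) (f : ℝ → ℝ), (∀ t ∈ Set.Ioo a b, HasDerivAt f (-κ * γ * y t * f t) t) →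
      ∀ t ∈ Set.Ioo a b, f t = f t0 * (E t) ^ γ := by
    intro γ f hf
    have hconst : ∀ t ∈ Set.Ioo a b,
        HasDerivAt (fun s => f s * Real.exp (κ * γ * Y s)) 0 t := by
      intro t ht
      have hexp : HasDerivAt (fun s => Real.exp (κ * γ * Y s))
          (Real.exp (κ * γ * Y t) * (κ * γ * y t)) t := by
        exact ((hY t ht).const_mul (κ * γ)).exp
      have := (hf t ht).mul hexp
      refine this.congr_deriv ?_
      ring
    intro t ht
    have hc1 := const_of_deriv0 a b t0 ht0 _ hconst t ht
    simp only [hY0, mul_zero, Real.exp_zero, mul_one] at hc1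
    have hEγ : (E t) ^ γ = Real.exp (-(κ * γ * Y t)) := by
      show Real.exp (-(κ * Y t)) ^ γ = _
      rw [← Real.exp_mul]
      congr 1
      ring
    rw [hEγ]
    have hne : Real.exp (κ * γ * Y t) ≠ 0 := Real.exp_ne_zero _
    rw [← hc1, Real.exp_neg]
    field_simp
  have hxeq : ∀ i, ∀ t ∈ Set.Ioo a b, x i t = x i t0 * (E t) ^ (c i) :=
    fun i => hsol (c i) (x i) (hxode i)
  have hx'eq : ∀ j, ∀ t ∈ Set.Ioo a b, x' j t = x' j t0 * (E t) ^ (c' j) :=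
    fun j => hsol (c' j) (x' j) (hx'ode j)
  -- solve the r ODEs
  have hsolr : ∀ (f : ℝ → ℝ), (∀ t ∈ Set.Ioo a b, HasDerivAt f (-κ * f t) t) →
      ∀ t ∈ Set.Ioo a b, f t = f t0 * V t := by
    intro f hf
    have hconst : ∀ t ∈ Set.Ioo a b,
        HasDerivAt (fun s => f s * Real.exp (κ * (s - t0))) 0 t := by
      intro t ht
      have hid : HasDerivAt (fun s : ℝ => κ * (s - t0)) κ t := by
        simpa using ((hasDerivAt_id t).sub_const t0).const_mul κ
      have hexp := hid.exp
      have := (hf t ht).mul hexp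
      refine this.congr_deriv ?_
      ring
    intro t ht
    have hc1 := const_of_deriv0 a b t0 ht0 _ hconst t ht
    simp only [sub_self, mul_zero, Real.exp_zero, mul_one] at hc1
    have hne : Real.exp (κ * (t - t0)) ≠ 0 := Real.exp_ne_zero _
    rw [← hc1]
    show f t = f t * Real.exp (κ * (t - t0)) * Real.exp (-(κ * (t - t0)))
    rw [mul_assoc, ← Real.exp_add]
    simp
  have hreq : ∀ t ∈ Set.Ioo a b, r t = r t0 * V t := hsolr r hrode
  have hr'eq : ∀ t ∈ Set.Ioo a b, r' t = r' t0 * V t := hsolr r' hr'ode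
  -- coefficient functions
  set aco : ℝ → ℝ := fun e => ∑ i, if c i = e then x i t0 else 0 with hacodef
  set aco' : ℝ → ℝ := fun e => ∑ j, if c' j = e then x' j t0 else 0 with haco'def
  have haco_at : ∀ i, aco (c i) = x i t0 := by
    intro i
    calc aco (c i) = if c i = c i then x i t0 else 0 :=
          Finset.sum_eq_single i (fun i' _ hne => if_neg (fun hh => hne (hcd hh)))
            (fun hni => absurd (Finset.mem_univ i) hni)
      _ = x i t0 := if_pos rfl
  have haco'_at : ∀ j, aco' (c' j) = x' j t0 := by
    intro j
    calc aco' (c' j) = if c' j = c' j then x' j t0 else 0 :=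
          Finset.sum_eq_single j (fun j' _ hne => if_neg (fun hh => hne (hcd' hh)))
            (fun hnj => absurd (Finset.mem_univ j) hnj)
      _ = x' j t0 := if_pos rfl
  have haco_nr : ∀ e, e ∉ Set.range c → aco e = 0 := by
    intro e he
    exact Finset.sum_eq_zero (fun i _ => if_neg (fun hh => he ⟨i, hh⟩))
  have haco'_nr : ∀ e, e ∉ Set.range c' → aco' e = 0 := by
    intro e he
    exact Finset.sum_eq_zero (fun j _ => if_neg (fun hh => he ⟨j, hh⟩))
  have hchar : ∀ e, aco e ≠ 0 ↔ e ∈ Set.range c := by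
    intro e
    constructor
    · intro h; by_contra hr; exact h (haco_nr e hr)
    · rintro ⟨i, rfl⟩; rw [haco_at i]; exact (hxpos i t0 ht0).ne'
  have hchar' : ∀ e, aco' e ≠ 0 ↔ e ∈ Set.range c' := by
    intro e
    constructor
    · intro h; by_contra hr; exact h (haco'_nr e hr)
    · rintro ⟨j, rfl⟩; rw [haco'_at j]; exact (hx'pos j t0 ht0).ne'
  have hrpos0 : ∀ e, aco e ≠ 0 → 0 < e := by
    intro e h; obtain ⟨i, rfl⟩ := (hchar e).mp h; exact hc i
  have hr'pos0 : ∀ e, aco' e ≠ 0 → 0 < e := by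
    intro e h; obtain ⟨j, rfl⟩ := (hchar' e).mp h; exact hc' j
  -- the final reduction lemmas
  have hfinal : Set.range c = Set.range c' → n = n' ∧ Set.range c = Set.range c' := by
    intro hr
    refine ⟨?_, hr⟩
    have himg : (Finset.image c Finset.univ) = (Finset.image c' Finset.univ) := by
      apply Finset.coe_injective
      simp only [Finset.coe_image, Finset.coe_univ, Set.image_univ]
      exact hr
    have h1 : (Finset.image c Finset.univ).card = n := by
      rw [Finset.card_image_of_injective _ hcd, Finset.card_univ, Fintype.card_fin]
    have h2 : (Finset.image c' Finset.univ).card = n' := by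
      rw [Finset.card_image_of_injective _ hcd', Finset.card_univ, Fintype.card_fin]
    rw [← h1, ← h2, himg]
  have hrange_of_m : (∀ e, e ≠ 0 → aco e = aco' e) → Set.range c = Set.range c' := by
    intro hm
    ext e
    constructor
    · intro he
      have h0 : e ≠ 0 := ne_of_gt (by obtain ⟨i, rfl⟩ := he; exact hc i)
      refine (hchar' e).mp ?_
      rw [← hm e h0]
      exact (hchar e).mpr he
    · intro he
      have h0 : e ≠ 0 := ne_of_gt (by obtain ⟨j, rfl⟩ := he; exact hc' j)
      refine (hchar e).mp ?_
      rw [hm e h0]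
      exact (hchar' e).mpr he
  -- algebra elements
  set S0 : AddMonoidAlgebra ℝ ℝ := ∑ i, AddMonoidAlgebra.single (c i) (x i t0) with hS0def
  set S0' : AddMonoidAlgebra ℝ ℝ := ∑ j, AddMonoidAlgebra.single (c' j) (x' j t0) with hS0'def
  set M0 : AddMonoidAlgebra ℝ ℝ := S0 - S0' with hM0def
  set M1 : AddMonoidAlgebra ℝ ℝ := (∑ i, AddMonoidAlgebra.single (c i) (c i * x i t0))
    - (∑ j, AddMonoidAlgebra.single (c' j) (c' j * x' j t0)) with hM1def
  have hS0app : ∀ e, S0 e = aco e := by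
    intro e
    rw [hS0def, AddMonoidAlgebra.coeff_sum, Finsupp.finset_sum_apply]
    exact Finset.sum_congr rfl fun i _ => AddMonoidAlgebra.coeff_single_apply
  have hS0'app : ∀ e, S0' e = aco' e := by
    intro e
    rw [hS0'def, AddMonoidAlgebra.coeff_sum, Finsupp.finset_sum_apply]
    exact Finset.sum_congr rfl fun j _ => AddMonoidAlgebra.coeff_single_apply
  have hM0app : ∀ e, M0 e = aco e - aco' e := by
    intro e
    rw [hM0def, AddMonoidAlgebra.coeff_sub, Finsupp.sub_apply, hS0app, hS0'app]
  have hM1app : ∀ e, M1 e = e * (aco e - aco' e) := by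
    intro e
    rw [hM1def, AddMonoidAlgebra.coeff_sub, Finsupp.sub_apply, AddMonoidAlgebra.coeff_sum,
      AddMonoidAlgebra.coeff_sum, Finsupp.finset_sum_apply, Finsupp.finset_sum_apply]
    have h1 : ∑ i, (AddMonoidAlgebra.single (c i) (c i * x i t0)) e
        = e * ∑ i, (if c i = e then x i t0 else 0) := by
      rw [Finset.mul_sum]
      refine Finset.sum_congr rfl fun i _ => ?_
      rw [AddMonoidAlgebra.coeff_single_apply]
      by_cases hh : c i = e
      · rw [if_pos hh, if_pos hh, ← hh]
      · rw [if_neg hh, if_neg hh, mul_zero]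
    have h2 : ∑ j, (AddMonoidAlgebra.single (c' j) (c' j * x' j t0)) e
        = e * ∑ j, (if c' j = e then x' j t0 else 0) := by
      rw [Finset.mul_sum]
      refine Finset.sum_congr rfl fun j _ => ?_
      rw [AddMonoidAlgebra.coeff_single_apply]
      by_cases hh : c' j = e
      · rw [if_pos hh, if_pos hh, ← hh]
      · rw [if_neg hh, if_neg hh, mul_zero]
    rw [h1, h2, ← mul_sub]
  -- evaluation identities
  have hevS0 : ∀ t ∈ Set.Ioo a b, evalHom (E t) (hEpos t) S0 = ∑ i, x i t := by
    intro t ht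
    rw [hS0def, map_sum]
    refine Finset.sum_congr rfl fun i _ => ?_
    rw [evalHom_single, ← hxeq i t ht]
  have hevM0 : ∀ t ∈ Set.Ioo a b,
      evalHom (E t) (hEpos t) M0 = (∑ i, x i t) - (∑ j, x' j t) := by
    intro t ht
    rw [hM0def, map_sub, hevS0 t ht, hS0'def, map_sum]
    congr 1
    refine Finset.sum_congr rfl fun j _ => ?_
    rw [evalHom_single, ← hx'eq j t ht]
  have hevM1 : ∀ t ∈ Set.Ioo a b,
      evalHom (E t) (hEpos t) M1 = (∑ i, c i * x i t) - (∑ j, c' j * x' j t) := by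
    intro t ht
    rw [hM1def, map_sub, map_sum, map_sum]
    congr 1
    · refine Finset.sum_congr rfl fun i _ => ?_
      rw [evalHom_single, hxeq i t ht]
      ring
    · refine Finset.sum_congr rfl fun j _ => ?_
      rw [evalHom_single, hx'eq j t ht]
      ring
  -- the two structural identities
  have hident0 : ∀ t ∈ Set.Ioo a b,
      evalHom (E t) (hEpos t) M0 + (r t0 - r' t0) * V t + (xbar - xbar') = 0 := by
    intro t ht
    rw [hevM0 t ht]
    have h1 := hrep t ht
    have h2 := hrep' t ht
    have h3 := hreq t ht
    have h4 := hr'eq t ht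
    nlinarith [h1, h2, h3, h4]
  have hident1 : ∀ t ∈ Set.Ioo a b,
      y t * evalHom (E t) (hEpos t) M1 + (r t0 - r' t0) * V t = 0 := by
    intro t ht
    set F : ℝ → ℝ := fun s => ((∑ i, x i s) + r s + xbar) - ((∑ j, x' j s) + r' s + xbar')
      with hFdef
    have hF0 : ∀ s ∈ Set.Ioo a b, F s = 0 := by
      intro s hs
      have h1 := hrep s hs
      have h2 := hrep' s hs
      rw [hFdef]
      simp only []
      linarith
    have hFd : HasDerivAt F (((∑ i, (-κ * c i * y t * x i t)) + (-κ * r t))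
        - ((∑ j, (-κ * c' j * y t * x' j t)) + (-κ * r' t))) t := by
      apply HasDerivAt.sub
      · exact ((HasDerivAt.fun_sum (fun i _ => hxode i t ht)).add (hrode t ht)).add_const xbar
      · exact ((HasDerivAt.fun_sum (fun j _ => hx'ode j t ht)).add (hr'ode t ht)).add_const xbar'
    have hFd0 : HasDerivAt F 0 t := by
      have hev : F =ᶠ[nhds t] (fun _ => (0:ℝ)) := by
        filter_upwards [isOpen_Ioo.mem_nhds ht] with s hs using hF0 s hs
      exact (hasDerivAt_const t (0:ℝ)).congr_of_eventuallyEq hev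
    have heq0 := hFd.unique hFd0
    have hsum1 : ∑ i, (-κ * c i * y t * x i t) = -κ * (y t * ∑ i, c i * x i t) := by
      rw [Finset.mul_sum, Finset.mul_sum]
      exact Finset.sum_congr rfl fun i _ => by ring
    have hsum2 : ∑ j, (-κ * c' j * y t * x' j t) = -κ * (y t * ∑ j, c' j * x' j t) := by
      rw [Finset.mul_sum, Finset.mul_sum]
      exact Finset.sum_congr rfl fun j _ => by ring
    rw [hsum1, hsum2] at heq0
    have hkey : y t * ((∑ i, c i * x i t) - (∑ j, c' j * x' j t)) + (r t - r' t) = 0 := by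
      have hκne : κ ≠ 0 := hκ.ne'
      have : -κ * (y t * ((∑ i, c i * x i t) - (∑ j, c' j * x' j t)) + (r t - r' t)) = 0 := by
        linarith [heq0]
      rcases mul_eq_zero.mp this with h | h
      · exact absurd h (by simp [hκne])
      · exact h
    rw [hevM1 t ht]
    have h3 := hreq t ht
    have h4 := hr'eq t ht
    nlinarith [hkey, h3, h4]
  -- image of E contains an interval
  set tau1 : ℝ := (3*a + b)/4 with htau1def
  set tau2 : ℝ := (a + 3*b)/4 with htau2def
  have htau1 : tau1 ∈ Set.Ioo a b := ⟨by rw [htau1def]; linarith, by rw [htau1def]; linarith⟩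
  have htau2 : tau2 ∈ Set.Ioo a b := ⟨by rw [htau2def]; linarith, by rw [htau2def]; linarith⟩
  have htau12 : tau1 < tau2 := by rw [htau1def, htau2def]; linarith
  have hsub12 : Set.Icc tau1 tau2 ⊆ Set.Ioo a b := fun w hw => ⟨lt_of_lt_of_le htau1.1 hw.1,
    lt_of_le_of_lt hw.2 htau2.2⟩
  have hYmono : StrictMonoOn Y (Set.Ioo a b) := by
    apply strictMonoOn_of_deriv_pos (convex_Ioo a b)
    · exact fun t ht => (hY t ht).continuousAt.continuousWithinAt
    · intro t ht
      rw [interior_Ioo] at ht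
      rw [(hY t ht).deriv]
      exact hypos t ht
  have hz12 : E tau2 < E tau1 := by
    have hYY : Y tau1 < Y tau2 := hYmono htau1 htau2 htau12
    show Real.exp (-(κ * Y tau2)) < Real.exp (-(κ * Y tau1))
    apply Real.exp_lt_exp.mpr
    nlinarith
  have hEcont : ContinuousOn E (Set.Icc tau1 tau2) := by
    intro t ht
    have h1 : ContinuousAt Y t := (hY t (hsub12 ht)).continuousAt
    have : ContinuousAt (fun s => Real.exp (-(κ * Y s))) t :=
      Real.continuous_exp.continuousAt.comp ((h1.const_mul κ).neg)
    exact this.continuousWithinAt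
  have himg : Set.Icc (E tau2) (E tau1) ⊆ E '' (Set.Icc tau1 tau2) :=
    intermediate_value_Icc' (le_of_lt htau12) hEcont
  have hzero_of : ∀ P : AddMonoidAlgebra ℝ ℝ,
      (∀ t ∈ Set.Ioo a b, evalHom (E t) (hEpos t) P = 0) → P = 0 := by
    intro P hP
    refine eval_zero_of (E tau2) (E tau1) (hEpos tau2) hz12 P ?_
    intro z hz
    obtain ⟨t, htm, hte⟩ := himg ⟨le_of_lt hz.1, le_of_lt hz.2⟩
    subst hte
    exact hP t (hsub12 htm)
  -- reduction when all coefficients of M1 vanish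
  have hM1zero_red : (∀ e, M1 e = 0) → n = n' ∧ Set.range c = Set.range c' := by
    intro hz
    apply hfinal
    apply hrange_of_m
    intro e he0
    have h := hz e
    rw [hM1app e] at h
    rcases mul_eq_zero.mp h with h | h
    · exact absurd h he0
    · linarith
  by_cases hCC : r t0 - r' t0 = 0
  · -- the rationalist difference vanishes
    have hM1z : M1 = 0 := by
      apply hzero_of
      intro t ht
      have h1 := hident1 t ht
      rw [hCC, zero_mul, add_zero] at h1
      rcases mul_eq_zero.mp h1 with h | h
      · exact absurd h (hypos t ht).ne'
      · exact h
    exact hM1zero_red (fun e => by rw [hM1z]; rfl)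
  · -- the rationalist difference does not vanish
    set q : ℝ := r t0 / (r t0 - r' t0) with hqdef
    set K : ℝ := 1 - xbar + q * (xbar - xbar') with hKdef
    set W : AddMonoidAlgebra ℝ ℝ := AddMonoidAlgebra.single (0:ℝ) K - S0 + q • M0 with hWdef
    have hWapp : ∀ e, W e = (if (0:ℝ) = e then K else 0) - aco e + q * (aco e - aco' e) := by
      intro e
      rw [hWdef, AddMonoidAlgebra.coeff_add, Finsupp.add_apply, AddMonoidAlgebra.coeff_sub,
        Finsupp.sub_apply, AddMonoidAlgebra.coeff_smul, Finsupp.smul_apply, asingle_apply,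
        hS0app, hM0app, smul_eq_mul]
    have hevW : ∀ t ∈ Set.Ioo a b, evalHom (E t) (hEpos t) W = y t := by
      intro t ht
      rw [hWdef, map_add, map_sub, map_smul, evalHom_asingle, Real.rpow_zero, mul_one,
        hevS0 t ht, hevM0 t ht]
      have hI := hident0 t ht
      rw [hevM0 t ht] at hI
      have hyt := hrep t ht
      have hrt := hreq t ht
      have h6 : ((∑ i, x i t) - (∑ j, x' j t)) + (xbar - xbar') = (r t0 - r' t0) * (-V t) := by
        linarith [hI]
      have h5 : q * ((xbar - xbar') + ((∑ i, x i t) - (∑ j, x' j t))) = -(r t0 * V t) := by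
        calc q * ((xbar - xbar') + ((∑ i, x i t) - (∑ j, x' j t)))
            = q * ((r t0 - r' t0) * (-V t)) := by rw [add_comm, h6]
          _ = -(r t0 * V t) := by rw [hqdef]; field_simp
      simp only [smul_eq_mul]
      rw [hKdef]
      linear_combination h5 - hyt + hrt
    have halg : W * M1 = M0 + AddMonoidAlgebra.single (0:ℝ) (xbar - xbar') := by
      have hzz := hzero_of (W * M1 - (M0 + AddMonoidAlgebra.single (0:ℝ) (xbar - xbar'))) ?_
      · exact sub_eq_zero.mp hzz
      · intro t ht
        rw [map_sub, map_mul, hevW t ht, map_add, evalHom_asingle, Real.rpow_zero, mul_one]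
        have hI0 := hident0 t ht
        have hI1 := hident1 t ht
        linarith
    -- endgame: coefficient analysis
    have hRHSapp : ∀ e, (M0 + AddMonoidAlgebra.single (0:ℝ) (xbar - xbar')) e
        = (aco e - aco' e) + (if (0:ℝ) = e then (xbar - xbar') else 0) := by
      intro e
      rw [AddMonoidAlgebra.coeff_add, Finsupp.add_apply, hM0app, asingle_apply]
    by_cases hM1 : M1 = 0
    · exact hM1zero_red (fun e => by rw [hM1]; rfl)
    · have hsupp : M1.coeff.support.Nonempty :=
          Finsupp.support_nonempty_iff.mpr (fun h => hM1 (AddMonoidAlgebra.coeff_eq_zero.mp h))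
      set d := M1.coeff.support.max' hsupp with hddef
      have hdmem : M1 d ≠ 0 := Finsupp.mem_support_iff.mp (M1.coeff.support.max'_mem hsupp)
      have hdtop : ∀ e, d < e → M1 e = 0 := by
        intro e he
        by_contra hcon
        exact absurd (Finset.le_max' _ e (Finsupp.mem_support_iff.mpr hcon)) (not_le.mpr he)
      have hm_pos : ∀ e, (aco e - aco' e) ≠ 0 → 0 < e := by
        intro e h
        by_cases h1 : aco e = 0
        · refine hr'pos0 e (fun hh => h ?_)
          rw [h1, hh, sub_zero]
        · exact hrpos0 e h1
      have hmd : aco d - aco' d ≠ 0 := by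
        intro hh
        apply hdmem
        rw [hM1app, hh, mul_zero]
      have hdpos : 0 < d := hm_pos d hmd
      have hWne : W ≠ 0 := by
        intro h0
        have h1 : (M0 + AddMonoidAlgebra.single (0:ℝ) (xbar - xbar')) d
            = (0 : AddMonoidAlgebra ℝ ℝ) d := by rw [← halg, h0, zero_mul]
        rw [hRHSapp d, if_neg hdpos.ne] at h1
        apply hmd
        simpa using h1
      set eW := W.coeff.support.max'
          (Finsupp.support_nonempty_iff.mpr (fun h => hWne (AddMonoidAlgebra.coeff_eq_zero.mp h))) with heWdef
      have hWmem : W eW ≠ 0 := Finsupp.mem_support_iff.mp (W.coeff.support.max'_mem _)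
      have hWtop : ∀ e, eW < e → W e = 0 := by
        intro e he
        by_contra hcon
        exact absurd (Finset.le_max' _ e (Finsupp.mem_support_iff.mpr hcon)) (not_le.mpr he)
      have hWnonneg : 0 ≤ eW := by
        by_contra h
        push_neg at h
        apply hWmem
        rw [hWapp]
        have h1 : aco eW = 0 := by
          by_contra hh; linarith [hrpos0 eW hh]
        have h2 : aco' eW = 0 := by
          by_contra hh; linarith [hr'pos0 eW hh]
        rw [h1, h2, if_neg (by intro hh; linarith)]
        ring
      have heW0 : eW = 0 := by
        by_contra hne
        have heWpos : 0 < eW := lt_of_le_of_ne hWnonneg (Ne.symm hne)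
        have hLHS : (W * M1) (eW + d) = W eW * M1 d := mul_apply_top W M1 eW d hWtop hdtop
        have hco : (W * M1) (eW + d)
            = (M0 + AddMonoidAlgebra.single (0:ℝ) (xbar - xbar')) (eW + d) := by rw [halg]
        rw [hLHS, hRHSapp] at hco
        have hm0 : aco (eW + d) - aco' (eW + d) = 0 := by
          have hz := hdtop (eW + d) (by linarith)
          rw [hM1app] at hz
          rcases mul_eq_zero.mp hz with h | h
          · exact absurd h (by positivity)
          · exact h
        rw [hm0, if_neg (by intro hh; linarith)] at hco
        exact mul_ne_zero hWmem hdmem (by linarith [hco])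
      have hK'ne : W 0 ≠ 0 := heW0 ▸ hWmem
      have hWoff : ∀ e, e ≠ 0 → W e = 0 := by
        intro e he
        rcases lt_trichotomy e 0 with h | h | h
        · rw [hWapp]
          have h1 : aco e = 0 := by
            by_contra hh; linarith [hrpos0 e hh]
          have h2 : aco' e = 0 := by
            by_contra hh; linarith [hr'pos0 e hh]
          rw [h1, h2, if_neg (by intro hh; linarith)]
          ring
        · exact absurd h he
        · exact hWtop e (by rw [heW0]; exact h)
      have hWsingle : W = AddMonoidAlgebra.single (0:ℝ) (W 0) := by
        ext e
        rw [asingle_apply]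
        by_cases he : (0:ℝ) = e
        · rw [if_pos he, ← he]
        · rw [if_neg he]
          exact hWoff e (fun hh => he hh.symm)
      have hKM1 : ∀ e, W 0 * M1 e
          = (aco e - aco' e) + (if (0:ℝ) = e then (xbar - xbar') else 0) := by
        intro e
        have h1 : (W * M1) e = (M0 + AddMonoidAlgebra.single (0:ℝ) (xbar - xbar')) e := by
          rw [halg]
        rw [hRHSapp] at h1
        rw [hWsingle, AddMonoidAlgebra.coeff_single_zero_mul] at h1
        exact h1
      have hKd : W 0 * d = 1 := by
        have h1 := hKM1 d
        rw [hM1app, if_neg hdpos.ne, add_zero] at h1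
        have h2 : (W 0 * d - 1) * (aco d - aco' d) = 0 := by linear_combination h1
        rcases mul_eq_zero.mp h2 with h | h
        · linarith
        · exact absurd h hmd
      have haco0 : aco 0 = 0 := haco_nr 0 (by rintro ⟨i, hi⟩; exact (hc i).ne' hi)
      have haco'0 : aco' 0 = 0 := haco'_nr 0 (by rintro ⟨j, hj⟩; exact (hc' j).ne' hj)
      have hmoff : ∀ e, e ≠ d → aco e - aco' e = 0 := by
        intro e he
        by_contra hme
        have he0 : e ≠ 0 := by
          intro h0
          apply hme
          rw [h0, haco0, haco'0, sub_zero]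
        have h1 := hKM1 e
        rw [hM1app, if_neg (fun hh => he0 hh.symm), add_zero] at h1
        have h2 : (W 0 * e - 1) * (aco e - aco' e) = 0 := by linear_combination h1
        have h3 : W 0 * e = 1 := by
          rcases mul_eq_zero.mp h2 with h | h
          · linarith
          · exact absurd h hme
        have h4 : W 0 * e = W 0 * d := by rw [h3, hKd]
        exact he (mul_left_cancel₀ hK'ne h4)
      have hacoq : ∀ e, e ≠ 0 → aco e = q * (aco e - aco' e) := by
        intro e he
        have h1 := hWoff e he
        rw [hWapp, if_neg (fun hh => he hh.symm)] at h1
        linarith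
      have hcd_all : ∀ i, c i = d := by
        intro i
        by_contra hne
        have h1 := hmoff (c i) hne
        have h2 := hacoq (c i) (hc i).ne'
        rw [h1, mul_zero] at h2
        exact absurd (haco_at i ▸ h2) (hxpos i t0 ht0).ne'
      have hc'd_all : ∀ j, c' j = d := by
        intro j
        by_contra hne
        have h1 := hmoff (c' j) hne
        have h2 : aco (c' j) = aco' (c' j) := by linarith
        have h3 : aco (c' j) ≠ 0 := by
          rw [h2, haco'_at j]
          exact (hx'pos j t0 ht0).ne'
        obtain ⟨i, hi⟩ := (hchar _).mp h3
        apply hne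
        rw [← hi]
        exact hcd_all i
      apply hfinal
      ext e
      constructor
      · rintro ⟨i, rfl⟩
        exact ⟨⟨0, hn'⟩, by rw [hc'd_all ⟨0, hn'⟩, hcd_all i]⟩
      · rintro ⟨j, rfl⟩
        exact ⟨⟨0, hn⟩, by rw [hcd_all ⟨0, hn⟩, hc'd_all j]⟩
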